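/- arXiv:1110.4886 — 2 statements merged into one kernel-verified Lean document; each statement's English description precedes it below -/
import Mathlib

section
/- For ω ∈ ℂ \ ℝ, the doubly-indexed sum ∑_{(m,n) ∈ ℤ² \ {(0,0),(−1,0)}} (1/(m+nω)² − 1/(m+1+nω)²) equals 0. -/
open Complex

def negShiftEquiv : {q : ℤ × ℤ // q ≠ (0, 0) ∧ q ≠ (-1, 0)} ≃
    {q : ℤ × ℤ // q ≠ (0, 0) ∧ q ≠ (-1, 0)} where
  toFun q := ⟨(-q.1.1 - 1, -q.1.2), by
    obtain ⟨⟨m, n⟩, h1, h2⟩ := q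
    dsimp only
    constructor
    · intro h; apply h2; rw [Prod.mk.injEq] at h ⊢; omega
    · intro h; apply h1; rw [Prod.mk.injEq] at h ⊢; omega⟩
  invFun q := ⟨(-q.1.1 - 1, -q.1.2), by
    obtain ⟨⟨m, n⟩, h1, h2⟩ := q
    dsimp only
    constructor
    · intro h; apply h2; rw [Prod.mk.injEq] at h ⊢; omega
    · intro h; apply h1; rw [Prod.mk.injEq] at h ⊢; omega⟩
  left_inv q := by ext <;> simp
  right_inv q := by ext <;> simp

/-- For `ω ∉ ℝ`, the doubly-indexed sum
`∑_{(m,n) ∈ ℤ² \ {(0,0),(−1,0)}} (1/(m+nω)² − 1/(m+1+nω)²)` vanishes. -/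
theorem double_sum_vanishes (ω : ℂ) (hω : ω.im ≠ 0) :
    (∑' q : {q : ℤ × ℤ // q ≠ (0, 0) ∧ q ≠ (-1, 0)},
        (1 / ((q.1.1 : ℂ) + (q.1.2 : ℂ) * ω) ^ 2
          - 1 / ((q.1.1 : ℂ) + 1 + (q.1.2 : ℂ) * ω) ^ 2)) = 0 := by
  set f : {q : ℤ × ℤ // q ≠ (0, 0) ∧ q ≠ (-1, 0)} → ℂ := fun q =>
    (1 / ((q.1.1 : ℂ) + (q.1.2 : ℂ) * ω) ^ 2
      - 1 / ((q.1.1 : ℂ) + 1 + (q.1.2 : ℂ) * ω) ^ 2) with hf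
  have key : ∀ q, f (negShiftEquiv q) = -f q := by
    rintro ⟨⟨m, n⟩, hq⟩
    simp only [hf, negShiftEquiv, Equiv.coe_fn_mk]
    push_cast
    have h1 : ((-m : ℂ) - 1 + (-n : ℂ) * ω) ^ 2 = ((m : ℂ) + 1 + (n : ℂ) * ω) ^ 2 := by ring
    have h2 : ((-m : ℂ) - 1 + 1 + (-n : ℂ) * ω) ^ 2 = ((m : ℂ) + (n : ℂ) * ω) ^ 2 := by ring
    rw [h1, h2]; ring
  have h := negShiftEquiv.tsum_eq f
  rw [tsum_congr key, tsum_neg] at h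
  linear_combination -h/2
end

section
/- Let h be an entire function on ℂ such that z ↦ h(z + p_j) − h(z) is constant for j = 1, 2, where p₁, p₂ are ℝ-linearly independent. Then h is an affine function: h(z) = az + b for some a, b ∈ ℂ. -/
open Function Bornology Set

/-- An entire function `h` such that `h(z+pⱼ) − h(z)` is constant for two ℝ-linearly
independent periods is affine. -/
theorem entire_quasi_periodic_affine
    (h : ℂ → ℂ) (hh : Differentiable ℂ h)
    (p₁ p₂ : ℂ) (hind : LinearIndependent ℝ ![p₁, p₂])
    (hc₁ : ∃ c₁ : ℂ, ∀ z, h (z + p₁) - h z = c₁)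
    (hc₂ : ∃ c₂ : ℂ, ∀ z, h (z + p₂) - h z = c₂) :
    ∃ a b : ℂ, ∀ z, h z = a * z + b := by
  set g := deriv h with hg
  have hg_diff : Differentiable ℂ g := fun z =>
    (((hh.differentiableOn.analyticOnNhd isOpen_univ).deriv) z trivial).differentiableAt
  -- g is periodic with periods p₁, p₂
  have hper : ∀ p : ℂ, (∃ c : ℂ, ∀ z, h (z + p) - h z = c) → Function.Periodic g p := by
    rintro p ⟨c, hc⟩ z
    have heq : (fun w => h (w + p)) = fun w => h w + c := by
      funext w
      have := hc w
      linear_combination this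
    have h2 : deriv (fun w => h w + c) z = deriv h z := by
      simp
    show deriv h (z + p) = deriv h z
    rw [← deriv_comp_add_const h p z, heq, h2]
  have hp1 : Function.Periodic g p₁ := hper p₁ hc₁
  have hp2 : Function.Periodic g p₂ := hper p₂ hc₂
  -- basis of ℂ over ℝ
  have hb : ∀ z : ℂ, ∃ x y : ℝ, z = x • p₁ + y • p₂ := by
    intro z
    have hcard : Fintype.card (Fin 2) = Module.finrank ℝ ℂ := by
      simp [Complex.finrank_real_complex]
    let b := basisOfLinearIndependentOfCardEqFinrank hind hcard
    have hbv : ∀ i, b i = ![p₁, p₂] i := fun i =>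
      coe_basisOfLinearIndependentOfCardEqFinrank hind hcard ▸ rfl
    refine ⟨b.repr z 0, b.repr z 1, ?_⟩
    have := b.sum_repr z
    rw [Fin.sum_univ_two, hbv 0, hbv 1] at this
    simpa using this.symm
  -- g is bounded
  have hbdd : IsBounded (range g) := by
    set K : Set ℂ := (fun q : ℝ × ℝ => q.1 • p₁ + q.2 • p₂) '' (Icc 0 1 ×ˢ Icc 0 1) with hK
    have hKcomp : IsCompact K := (isCompact_Icc.prod isCompact_Icc).image (by fun_prop)
    have hsub : range g ⊆ g '' K := by
      rintro _ ⟨z, rfl⟩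
      obtain ⟨x, y, rfl⟩ := hb z
      refine ⟨Int.fract x • p₁ + Int.fract y • p₂, ⟨(Int.fract x, Int.fract y), ?_, rfl⟩, ?_⟩
      · exact ⟨⟨(Int.fract_nonneg x), (Int.fract_lt_one x).le⟩,
          ⟨(Int.fract_nonneg y), (Int.fract_lt_one y).le⟩⟩
      · have e1 : x • p₁ + y • p₂ =
            (Int.fract x • p₁ + Int.fract y • p₂) + (⌊y⌋ • p₂ + ⌊x⌋ • p₁) := by
          rw [Int.fract, Int.fract]
          module
        rw [e1, ← add_assoc, (hp1.zsmul ⌊x⌋) _, (hp2.zsmul ⌊y⌋) _]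
    exact (((hKcomp.image hg_diff.continuous).isBounded)).subset hsub
  obtain ⟨a, ha⟩ := hg_diff.exists_eq_const_of_bounded hbdd
  -- h z - a z is constant
  have hf : Differentiable ℂ (fun z => h z - a * z) := hh.sub (by fun_prop)
  have hf' : ∀ z, deriv (fun z => h z - a * z) z = 0 := by
    intro z
    have h2 : HasDerivAt (fun z : ℂ => a * z) a z := by
      simpa using (hasDerivAt_id z).const_mul a
    have hd : HasDerivAt (fun z => h z - a * z) (deriv h z - a) z :=
      (hh z).hasDerivAt.sub h2
    rw [hd.deriv, ← hg, ha]
    simp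
  refine ⟨a, h 0 - a * 0, fun z => ?_⟩
  have := is_const_of_deriv_eq_zero hf hf' z 0
  linear_combination this
end
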